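/- Let m, n be positive integers with m > n, and suppose there exists an m × 2 matrix over F₂ with no zero rows such that every (m-n)-element subset of rows has rank 2. Then m ≥ (3/2)(n+1), i.e., 2m ≥ 3(n+1). Conversely, if 2m ≥ 3(n+1), such a matrix exists. -/

import Mathlib

lemma span_pair_eq_top_aux (u v : Fin 2 → ZMod 2) (hu : u ≠ 0) (hv : v ≠ 0)
    (huv : u ≠ v) : Submodule.span (ZMod 2) {u, v} = ⊤ := by
  have key : ∀ x : Fin 2 → ZMod 2, x = 0 ∨ x = u ∨ x = v ∨ x = u + v := by
    have h : ∀ u v : Fin 2 → ZMod 2, u ≠ 0 → v ≠ 0 → u ≠ v →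
        ∀ x : Fin 2 → ZMod 2, x = 0 ∨ x = u ∨ x = v ∨ x = u + v := by decide
    exact h u v hu hv huv
  rw [eq_top_iff]
  intro x _
  rcases key x with h | h | h | h
  · simp [h]
  · exact h ▸ Submodule.subset_span (by simp)
  · exact h ▸ Submodule.subset_span (by simp)
  · exact h ▸ Submodule.add_mem _ (Submodule.subset_span (by simp))
      (Submodule.subset_span (by simp))

lemma span_singleton_ne_top_aux (v : Fin 2 → ZMod 2) :
    Submodule.span (ZMod 2) {v} ≠ ⊤ := by
  obtain ⟨w, hw0, hwv⟩ : ∃ w : Fin 2 → ZMod 2, w ≠ 0 ∧ w ≠ v := by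
    have h : ∀ v : Fin 2 → ZMod 2, ∃ w : Fin 2 → ZMod 2, w ≠ 0 ∧ w ≠ v := by decide
    exact h v
  intro h
  have hw : w ∈ Submodule.span (ZMod 2) {v} := h ▸ Submodule.mem_top
  rw [Submodule.mem_span_singleton] at hw
  obtain ⟨c, hc⟩ := hw
  have hc01 : c = 0 ∨ c = 1 := by
    have : ∀ c : ZMod 2, c = 0 ∨ c = 1 := by decide
    exact this c
  rcases hc01 with rfl | rfl
  · exact hw0 (by simpa using hc.symm)
  · exact hwv (by simpa using hc.symm)

lemma aux_forward {m : ℕ} (M : Fin m → Fin 2 → ZMod 2) (v : Fin 2 → ZMod 2) (c : ℕ)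
    (hT : c ≤ (Finset.univ.filter (fun i => M i = v)).card)
    (hspan : ∀ S : Finset (Fin m), S.card = c →
      Submodule.span (ZMod 2) (M '' (S : Set (Fin m))) = ⊤) : False := by
  obtain ⟨S, hSsub, hScard⟩ := Finset.exists_subset_card_eq hT
  have himg : M '' (S : Set (Fin m)) ⊆ {v} := by
    rintro x ⟨i, hi, rfl⟩
    have := hSsub hi
    simp only [Finset.mem_filter] at this
    simp [this.2]
  have := hspan S hScard
  have hle : (⊤ : Submodule (ZMod 2) (Fin 2 → ZMod 2)) ≤ Submodule.span (ZMod 2) {v} :=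
    this ▸ Submodule.span_mono himg
  exact span_singleton_ne_top_aux v (top_unique hle)

theorem exists_rank_two_matrix_iff (m n : ℕ) (hn : 0 < n) (hm : n < m) :
    (∃ M : Fin m → Fin 2 → ZMod 2, (∀ i, M i ≠ 0) ∧
        ∀ S : Finset (Fin m), S.card = m - n →
          Submodule.span (ZMod 2) (M '' (S : Set (Fin m))) = ⊤) ↔
      3 * (n + 1) ≤ 2 * m := by
  constructor
  · rintro ⟨M, hM0, hMspan⟩
    by_contra hlt
    push_neg at hlt
    have hclass : ∀ i, M i = ![1,0] ∨ M i = ![0,1] ∨ M i = ![1,1] := by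
      intro i
      have h : ∀ x : Fin 2 → ZMod 2, x ≠ 0 →
          x = ![1,0] ∨ x = ![0,1] ∨ x = ![1,1] := by decide
      exact h _ (hM0 i)
    set A := Finset.univ.filter (fun i => M i = ![1,0]) with hA
    set B := Finset.univ.filter (fun i => M i = ![0,1]) with hB
    set C := Finset.univ.filter (fun i => M i = ![1,1]) with hC
    have hcover : (Finset.univ : Finset (Fin m)) ⊆ A ∪ B ∪ C := by
      intro i _
      simp only [hA, hB, hC, Finset.mem_union, Finset.mem_filter, Finset.mem_univ, true_and]
      rcases hclass i with h | h | h
      · exact Or.inl (Or.inl h)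
      · exact Or.inl (Or.inr h)
      · exact Or.inr h
    have hmle : m ≤ A.card + B.card + C.card := by
      calc m = (Finset.univ : Finset (Fin m)).card := by simp
        _ ≤ (A ∪ B ∪ C).card := Finset.card_le_card hcover
        _ ≤ (A ∪ B).card + C.card := Finset.card_union_le _ _
        _ ≤ A.card + B.card + C.card := by
            have := Finset.card_union_le A B; omega
    have hbig : m - n ≤ A.card ∨ m - n ≤ B.card ∨ m - n ≤ C.card := by omega
    rcases hbig with h | h | h
    · exact aux_forward M ![1,0] (m - n) h hMspan
    · exact aux_forward M ![0,1] (m - n) h hMspan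
    · exact aux_forward M ![1,1] (m - n) h hMspan
  · intro h
    set k := m - n - 1 with hk
    have hk1 : m - n = k + 1 := by omega
    have hkm : m ≤ 3 * k := by omega
    set t1 := min k m with ht1
    set t2 := min (2 * k) m with ht2
    refine ⟨fun i => if i.val < t1 then ![1,0] else if i.val < t2 then ![0,1] else ![1,1],
      ?_, ?_⟩
    · intro i
      dsimp only
      split_ifs <;> decide
    · intro S hS
      set M : Fin m → Fin 2 → ZMod 2 :=
        fun i => if i.val < t1 then ![1,0] else if i.val < t2 then ![0,1] else ![1,1] with hM
      have hdist : (![1,0] : Fin 2 → ZMod 2) ≠ ![0,1] ∧ (![1,0] : Fin 2 → ZMod 2) ≠ ![1,1]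
          ∧ (![0,1] : Fin 2 → ZMod 2) ≠ ![1,1] := by decide
      have hMval : ∀ j : Fin m, (M j = ![1,0] → (j : ℕ) < t1) ∧
          (M j = ![0,1] → t1 ≤ (j : ℕ) ∧ (j : ℕ) < t2) ∧
          (M j = ![1,1] → t2 ≤ (j : ℕ)) := by
        intro j
        simp only [hM]
        split_ifs with ha hb
        · exact ⟨fun _ => ha, fun h => absurd h (hdist.1),
            fun h => absurd h (hdist.2.1)⟩
        · exact ⟨fun h => absurd h.symm (hdist.1), fun _ => ⟨by omega, hb⟩,
            fun h => absurd h (hdist.2.2)⟩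
        · exact ⟨fun h => absurd h.symm (hdist.2.1), fun h => absurd h.symm (hdist.2.2),
            fun _ => by omega⟩
      -- there exist i j in S with different rows
      have hne : ∃ i ∈ S, ∃ j ∈ S, M i ≠ M j := by
        by_contra hcon
        push_neg at hcon
        have hScard : S.card = k + 1 := by rw [hS, hk1]
        have hSne : S.Nonempty := Finset.card_pos.mp (by omega)
        obtain ⟨i0, hi0⟩ := hSne
        have himg : (S.image Fin.val).card = k + 1 := by
          rw [Finset.card_image_of_injective _ Fin.val_injective, hScard]
        have hval : M i0 = ![1,0] ∨ M i0 = ![0,1] ∨ M i0 = ![1,1] := by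
          simp only [hM]; split_ifs <;> simp
        rcases hval with hv | hv | hv
        · have hsub : S.image Fin.val ⊆ Finset.range t1 := by
            intro x hx
            obtain ⟨j, hj, rfl⟩ := Finset.mem_image.mp hx
            exact Finset.mem_range.mpr ((hMval j).1 ((hcon j hj i0 hi0).trans hv))
          have hc := Finset.card_le_card hsub
          rw [himg, Finset.card_range] at hc
          omega
        · have hsub : S.image Fin.val ⊆ Finset.Ico t1 t2 := by
            intro x hx
            obtain ⟨j, hj, rfl⟩ := Finset.mem_image.mp hx
            exact Finset.mem_Ico.mpr ((hMval j).2.1 ((hcon j hj i0 hi0).trans hv))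
          have hc := Finset.card_le_card hsub
          rw [himg, Nat.card_Ico] at hc
          omega
        · have hsub : S.image Fin.val ⊆ Finset.Ico t2 m := by
            intro x hx
            obtain ⟨j, hj, rfl⟩ := Finset.mem_image.mp hx
            exact Finset.mem_Ico.mpr ⟨(hMval j).2.2 ((hcon j hj i0 hi0).trans hv), j.isLt⟩
          have hc := Finset.card_le_card hsub
          rw [himg, Nat.card_Ico] at hc
          omega
      obtain ⟨i, hi, j, hj, hij⟩ := hne
      have hMnz : ∀ l : Fin m, M l ≠ 0 := by
        intro l
        rw [hM]
        dsimp only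
        split_ifs <;> decide
      have hsub : {M i, M j} ⊆ M '' (S : Set (Fin m)) := by
        rw [Set.insert_subset_iff, Set.singleton_subset_iff]
        exact ⟨Set.mem_image_of_mem _ hi, Set.mem_image_of_mem _ hj⟩
      have := span_pair_eq_top_aux (M i) (M j) (hMnz i) (hMnz j) hij
      exact top_unique (this ▸ Submodule.span_mono hsub)
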